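/- Let (P, Q) and (P', Q') be pairs of orthogonal projections on H with P - Q = P' - Q'. Then ‖PQ - Π‖ = ‖P'Q' - Π'‖, where Π is the orthogonal projection onto the closed subspace ran P ∩ ran Q and Π' is the orthogonal projection onto ran P' ∩ ran Q'. (Equivalently, the cosine of the Friedrichs angle between ran P and ran Q is an invariant of the difference P - Q.) -/

import Mathlib

set_option linter.unusedSectionVars false
set_option maxHeartbeats 1000000

open ContinuousLinearMap

variable {H : Type*} [NormedAddCommGroup H] [InnerProductSpace ℂ H] [CompleteSpace H]

/-- An orthogonal projection: a selfadjoint idempotent bounded operator. -/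
def IsOrthogonalProjection (P : H →L[ℂ] H) : Prop :=
  IsSelfAdjoint P ∧ P * P = P

/-- A symmetry: a selfadjoint unitary operator. -/
def IsSymmetry (V : H →L[ℂ] H) : Prop :=
  IsSelfAdjoint V ∧ V * V = 1

/-- Two orthogonal projections are in generic position if the four canonical
intersections of their ranges and kernels are trivial. -/
def GenericPosition (P Q : H →L[ℂ] H) : Prop :=
  LinearMap.range (P : H →ₗ[ℂ] H) ⊓ LinearMap.range (Q : H →ₗ[ℂ] H) = ⊥ ∧
  LinearMap.range (P : H →ₗ[ℂ] H) ⊓ LinearMap.ker (Q : H →ₗ[ℂ] H) = ⊥ ∧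
  LinearMap.ker (P : H →ₗ[ℂ] H) ⊓ LinearMap.range (Q : H →ₗ[ℂ] H) = ⊥ ∧
  LinearMap.ker (P : H →ₗ[ℂ] H) ⊓ LinearMap.ker (Q : H →ₗ[ℂ] H) = ⊥


section RingAux
variable {R : Type*} [Ring R]

lemma mm {a b c : R} (h : a * b = c) (x : R) : a * (b * x) = c * x := by
  rw [← mul_assoc, h]

end RingAux
section RingAux
variable {R : Type*} [Ring R]

lemma swap_mul {a b : R} (h : a * b = b * a) (x : R) : a * (b * x) = b * (a * x) := by
  rw [← mul_assoc, h, mul_assoc]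

lemma idem_mul {a : R} (h : a * a = a) (x : R) : a * (a * x) = a * x := by
  rw [← mul_assoc, h]

lemma isUnit_block {u g r : R} (hr : r * r = r) (hur : u * r = r * u) (hgr : g * r = r * g)
    (hu : IsUnit u) (hg : IsUnit g) : IsUnit (u * (1 - r) + g * r) := by
  obtain ⟨U, rfl⟩ := hu
  obtain ⟨G, rfl⟩ := hg
  have h1 : r * (U : R) = (U : R) * r := hur.symm
  have h2 : r * (G : R) = (G : R) * r := hgr.symm
  have h3 : r * (↑U⁻¹ : R) = (↑U⁻¹ : R) * r := ((Commute.units_inv_left hur).eq).symm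
  have h4 : r * (↑G⁻¹ : R) = (↑G⁻¹ : R) * r := ((Commute.units_inv_left hgr).eq).symm
  refine isUnit_iff_exists.2 ⟨(↑U⁻¹ : R) * (1 - r) + (↑G⁻¹ : R) * r, ?_, ?_⟩ <;>
  · simp only [mul_sub, sub_mul, mul_add, add_mul, mul_one, one_mul, mul_assoc]
    simp only [swap_mul h1, swap_mul h2, swap_mul h3, swap_mul h4, h1, h2, h3, h4,
      idem_mul hr, hr, Units.mul_inv_cancel_left, Units.inv_mul_cancel_left,
      Units.mul_inv, Units.inv_mul]
    abel
end RingAux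

section AlgAux
variable {A : Type*} [Ring A] [Algebra ℂ A]

local notation "ι" => algebraMap ℂ A

lemma flip_isUnit {a r : A} (har : a * r = r * a) (hr : r * r = r) {l : ℂ} (hl : l ≠ 0)
    (hG : IsUnit (ι (1 - l) - (1 - a) * r)) : IsUnit (ι l - a * r) := by
  have har' : r * a = a * r := har.symm
  have key : ι l - a * r = (ι l) * (1 - r) + (-(ι (1-l) - (1-a)*r)) * r := by
    simp only [map_sub, map_one, neg_sub, sub_mul, mul_sub, add_mul, mul_add, one_mul,
      mul_one, mul_assoc]
    simp only [← Algebra.commutes, swap_mul har', har', idem_mul hr, hr]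
    abel
  rw [key]
  refine isUnit_block hr (Algebra.commutes l r) ?_ ((isUnit_iff_ne_zero.2 hl).map _) hG.neg
  · simp only [map_sub, map_one, neg_sub, sub_mul, mul_sub, one_mul, mul_one, mul_assoc]
    simp only [← Algebra.commutes, swap_mul har', har', idem_mul hr, hr]

lemma block1_isUnit {a r : A} (har : a * r = r * a) (hr : r * r = r) {l : ℂ} (hl : l ≠ 0)
    (ha : IsUnit (ι l - a)) : IsUnit (ι l - a * r) := by
  have key : ι l - a * r = (ι l) * (1 - r) + (ι l - a) * r := by
    simp only [mul_sub, sub_mul, mul_one]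
    abel
  rw [key]
  refine isUnit_block hr (Algebra.commutes l r) ?_ ((isUnit_iff_ne_zero.2 hl).map _) ha
  · simp only [sub_mul, mul_sub, Algebra.commutes l r, har]

lemma block2_isUnit {t t' G : A} (htt' : t * t' = 0) (htG : t * G = 0) (hGt : G * t = 0)
    (ht'G : t' * G = 0) (hGt' : G * t' = 0) (hG : G * G = G) {l : ℂ}
    (h0 : l ≠ 0) (h1 : l ≠ 1) (hu : IsUnit (ι l - t)) (hu' : IsUnit (ι l - t')) :
    IsUnit (ι l - (t + t' + G)) := by
  have cancel : ∀ X : A, ι l⁻¹ * (ι l * X) = X := fun X => by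
    rw [← mul_assoc, ← map_mul, inv_mul_cancel₀ h0, map_one, one_mul]
  have hu_eq : ι l⁻¹ * ((ι l - t) * (ι l - t')) = ι l - t - t' := by
    simp only [mul_sub, sub_mul, mul_assoc]
    simp only [← Algebra.commutes]
    simp only [mul_sub, cancel, htt', mul_zero]
    simp
  have key : ι l - (t + t' + G) = ((ι l⁻¹) * ((ι l - t) * (ι l - t'))) * (1 - G)
      + (ι (l - 1)) * G := by
    rw [hu_eq]
    simp only [map_sub, map_one, mul_sub, sub_mul, mul_one, one_mul, htG, ht'G, sub_zero]
    abel
  rw [key]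
  have hcomm : ((ι l⁻¹) * ((ι l - t) * (ι l - t'))) * G = G * ((ι l⁻¹) * ((ι l - t) * (ι l - t'))) := by
    rw [hu_eq]
    simp only [sub_mul, mul_sub, htG, ht'G, hGt, hGt', ← Algebra.commutes, sub_zero]
  refine isUnit_block hG hcomm ?_ (((isUnit_iff_ne_zero.2 (inv_ne_zero h0)).map
      (algebraMap ℂ A)).mul (hu.mul hu')) ?_
  · exact Algebra.commutes (l - 1) G
  · exact (isUnit_iff_ne_zero.2 (sub_ne_zero.2 h1)).map (algebraMap ℂ A)
lemma flip_mem {a r : A} (har : a * r = r * a) (hr : r * r = r) {l : ℂ}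
    (h0 : l ≠ 0) (h1 : l ≠ 1) :
    l ∈ spectrum ℂ (a * r) ↔ (1 - l) ∈ spectrum ℂ ((1 - a) * r) := by
  have har' : (1 - a) * r = r * (1 - a) := by
    simp only [sub_mul, mul_sub, one_mul, mul_one, har]
  constructor
  · intro hl
    rw [spectrum.mem_iff] at hl ⊢
    intro hu
    apply hl
    have := flip_isUnit (a := a) (r := r) har hr h0 hu
    exact this
  · intro hl
    rw [spectrum.mem_iff] at hl ⊢
    intro hu
    apply hl
    have h0' : (1:ℂ) - l ≠ 0 := sub_ne_zero.mpr (Ne.symm h1)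
    have := flip_isUnit (a := 1 - a) (r := r) har' hr h0' ?_
    · exact this
    · rwa [sub_sub_cancel, sub_sub_cancel]

end AlgAux

section OPTsec
variable {R : Type*} [Ring R] [StarRing R]

structure OPT (P Q E : R) : Prop where
  p2 : P * P = P
  ps : star P = P
  q2 : Q * Q = Q
  qs : star Q = Q
  e2 : E * E = E
  es : star E = E
  pe : P * E = E
  ep : E * P = E
  qe : Q * E = E
  eq : E * Q = E

namespace OPT
variable {P Q E F : R}

lemma swap (h : OPT P Q E) : OPT Q P E :=
  ⟨h.q2, h.qs, h.p2, h.ps, h.e2, h.es, h.qe, h.eq, h.pe, h.ep⟩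

attribute [local simp] mul_sub sub_mul mul_add add_mul mul_assoc

section Identities
variable (h : OPT P Q E)
include h

lemma o1 : star (P*Q - E) = Q*P - E := by
  simp only [star_sub, star_mul, h.ps, h.qs, h.es]

lemma o2 : (P*Q - E) * (Q*P - E) = P*Q*P - E := by
  simp only [mul_sub, sub_mul, mul_assoc, mm h.q2, mm h.qe, mm h.pe, mm h.e2, mm h.eq, mm h.ep,
    h.q2, h.qe, h.pe, h.e2, h.eq, h.ep]
  abel

lemma o3 : P*Q*P - E = (1 - (P-Q)*(P-Q)) * (P - E) := by
  simp only [mul_sub, sub_mul, mul_one, one_mul, mul_assoc, mm h.p2, mm h.q2, mm h.e2,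
    mm h.pe, mm h.ep, mm h.qe, mm h.eq, h.p2, h.q2, h.e2, h.pe, h.ep, h.qe, h.eq]
  abel

lemma o4 : (1 - (P-Q)*(P-Q)) * (P - E) = (P - E) * (1 - (P-Q)*(P-Q)) := by
  simp only [mul_sub, sub_mul, mul_one, one_mul, mul_assoc, mm h.p2, mm h.q2, mm h.e2,
    mm h.pe, mm h.ep, mm h.qe, mm h.eq, h.p2, h.q2, h.e2, h.pe, h.ep, h.qe, h.eq]
  abel

lemma o5 : (P - E) * (P - E) = P - E := by
  simp only [mul_sub, sub_mul, h.p2, h.e2, h.pe, h.ep]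
  abel

lemma o6 : ((P-Q)*(P-Q)) * (P - E) = (P*(1-Q)) * ((1-Q)*P) := by
  simp only [mul_sub, sub_mul, mul_one, one_mul, mul_assoc, mm h.p2, mm h.q2, mm h.e2,
    mm h.pe, mm h.ep, mm h.qe, mm h.eq, h.p2, h.q2, h.e2, h.pe, h.ep, h.qe, h.eq]
  abel

lemma o7 : star (P*Q*P - E) = P*Q*P - E := by
  simp only [star_sub, star_mul, h.ps, h.qs, h.es, mul_assoc]

lemma o8 : E * (P*Q*P - E) = 0 := by
  simp only [mul_sub, mul_assoc, mm h.ep, mm h.eq, h.ep, h.eq, h.e2]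
  abel

end Identities

section Mixed

lemma pf (h : OPT P Q E) (hc : OPT (1-P) (1-Q) F) : P * F = 0 := by
  have := hc.pe  -- (1-P) * F = F
  have h2 : F - P * F = F := by simpa [sub_mul] using this
  linear_combination (norm := abel) - h2

lemma fp (h : OPT P Q E) (hc : OPT (1-P) (1-Q) F) : F * P = 0 := by
  have := hc.ep
  have h2 : F - F * P = F := by simpa [mul_sub] using this
  linear_combination (norm := abel) - h2

lemma qf (h : OPT P Q E) (hc : OPT (1-P) (1-Q) F) : Q * F = 0 := by
  have := hc.qe
  have h2 : F - Q * F = F := by simpa [sub_mul] using this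
  linear_combination (norm := abel) - h2

lemma fq (h : OPT P Q E) (hc : OPT (1-P) (1-Q) F) : F * Q = 0 := by
  have := hc.eq
  have h2 : F - F * Q = F := by simpa [mul_sub] using this
  linear_combination (norm := abel) - h2

lemma ef (h : OPT P Q E) (hc : OPT (1-P) (1-Q) F) : E * F = 0 := by
  have h1 : E * F = E * (P * F) := by rw [← mul_assoc, h.ep]
  rw [h1, h.pf hc, mul_zero]

lemma fe (h : OPT P Q E) (hc : OPT (1-P) (1-Q) F) : F * E = 0 := by
  have h1 : F * E = F * (P * E) := by rw [h.pe]
  rw [h1, ← mul_assoc, h.fp hc, zero_mul]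

lemma m1 (h : OPT P Q E) (hc : OPT (1-P) (1-Q) F) :
    (P*Q*P - E) * ((1-P)*(1-Q)*(1-P) - F) = 0 := by
  simp only [mul_sub, sub_mul, mul_add, add_mul, mul_one, one_mul, mul_assoc,
    mm h.p2, mm h.q2, mm h.e2, mm h.pe, mm h.ep, mm h.qe, mm h.eq,
    mm (h.pf hc), mm (h.fp hc), mm (h.qf hc), mm (h.fq hc), mm (h.ef hc), mm (h.fe hc),
    mm hc.e2, h.p2, h.q2, h.e2, h.pe, h.ep, h.qe, h.eq,
    h.pf hc, h.fp hc, h.qf hc, h.fq hc, h.ef hc, h.fe hc, hc.e2,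
    zero_mul, mul_zero, sub_zero, zero_sub]
  abel

lemma m1' (h : OPT P Q E) (hc : OPT (1-P) (1-Q) F) :
    ((1-P)*(1-Q)*(1-P) - F) * (P*Q*P - E) = 0 := by
  simp only [mul_sub, sub_mul, mul_add, add_mul, mul_one, one_mul, mul_assoc,
    mm h.p2, mm h.q2, mm h.e2, mm h.pe, mm h.ep, mm h.qe, mm h.eq,
    mm (h.pf hc), mm (h.fp hc), mm (h.qf hc), mm (h.fq hc), mm (h.ef hc), mm (h.fe hc),
    mm hc.e2, h.p2, h.q2, h.e2, h.pe, h.ep, h.qe, h.eq,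
    h.pf hc, h.fp hc, h.qf hc, h.fq hc, h.ef hc, h.fe hc, hc.e2,
    zero_mul, mul_zero, sub_zero, zero_sub]
  abel

lemma m2a (h : OPT P Q E) (hc : OPT (1-P) (1-Q) F) : (P*Q*P - E) * (E + F) = 0 := by
  simp only [mul_sub, sub_mul, mul_add, add_mul, mul_one, one_mul, mul_assoc,
    mm h.p2, mm h.q2, mm h.e2, mm h.pe, mm h.ep, mm h.qe, mm h.eq,
    mm (h.pf hc), mm (h.fp hc), mm (h.qf hc), mm (h.fq hc), mm (h.ef hc), mm (h.fe hc),
    mm hc.e2, h.p2, h.q2, h.e2, h.pe, h.ep, h.qe, h.eq,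
    h.pf hc, h.fp hc, h.qf hc, h.fq hc, h.ef hc, h.fe hc, hc.e2,
    zero_mul, mul_zero, sub_zero, zero_sub]
  abel

lemma m2b (h : OPT P Q E) (hc : OPT (1-P) (1-Q) F) : (E + F) * (P*Q*P - E) = 0 := by
  simp only [mul_sub, sub_mul, mul_add, add_mul, mul_one, one_mul, mul_assoc,
    mm h.p2, mm h.q2, mm h.e2, mm h.pe, mm h.ep, mm h.qe, mm h.eq,
    mm (h.pf hc), mm (h.fp hc), mm (h.qf hc), mm (h.fq hc), mm (h.ef hc), mm (h.fe hc),
    mm hc.e2, h.p2, h.q2, h.e2, h.pe, h.ep, h.qe, h.eq,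
    h.pf hc, h.fp hc, h.qf hc, h.fq hc, h.ef hc, h.fe hc, hc.e2,
    zero_mul, mul_zero, sub_zero, zero_sub]
  abel

lemma m2e (h : OPT P Q E) (hc : OPT (1-P) (1-Q) F) : (E + F) * (E + F) = E + F := by
  simp only [mul_add, add_mul, h.e2, hc.e2, h.ef hc, h.fe hc, add_zero, zero_add]

lemma m3 (h : OPT P Q E) (hc : OPT (1-P) (1-Q) F) :
    1 - (P-Q)*(P-Q) = (P*Q*P - E) + ((1-P)*(1-Q)*(1-P) - F) + (E + F) := by
  simp only [mul_sub, sub_mul, mul_add, add_mul, mul_one, one_mul, mul_assoc,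
    mm h.p2, mm h.q2, h.p2, h.q2]
  abel

end Mixed
end OPT
end OPTsec
section Hilbert
variable {H : Type*} [NormedAddCommGroup H] [InnerProductSpace ℂ H] [CompleteSpace H]

local notation "𝐁" => H →L[ℂ] H

lemma inner_move {S : 𝐁} (hs : star S = S) (z w : H) :
    (inner ℂ (S z) w : ℂ) = inner ℂ z (S w) := by
  conv_lhs => rw [← hs, ContinuousLinearMap.star_eq_adjoint,
    ContinuousLinearMap.adjoint_inner_left]

lemma proj_norm_le {Q : 𝐁} (h2 : Q*Q = Q) (hs : star Q = Q) (y : H) : ‖Q y‖ ≤ ‖y‖ := by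
  have h1 : (inner ℂ (Q y) (Q y) : ℂ) = inner ℂ y (Q y) := by
    rw [inner_move hs y (Q y), ← ContinuousLinearMap.mul_apply, h2]
  have h3 : ‖Q y‖ ^ 2 = RCLike.re (inner ℂ y (Q y) : ℂ) := by
    rw [← h1, inner_self_eq_norm_sq]
  have h4 : RCLike.re (inner ℂ y (Q y) : ℂ) ≤ ‖y‖ * ‖Q y‖ := re_inner_le_norm _ _
  rcases eq_or_lt_of_le (norm_nonneg (Q y)) with h5 | h5
  · rw [← h5]; exact norm_nonneg y
  · nlinarith

lemma eigen_zero {P Q E : 𝐁} (h : OPT P Q E)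
    (hfix : ∀ x : H, P x = x → Q x = x → E x = x) {x : H}
    (hx : (P*Q*P - E) x = x) : x = 0 := by
  -- E x = 0
  have hEx : E x = 0 := by
    have h1 : E ((P*Q*P - E) x) = E x := congrArg E hx
    rw [← ContinuousLinearMap.mul_apply, h.o8] at h1
    simpa using h1.symm
  have hPQP : (P*Q*P) x = x := by
    have := hx
    rw [ContinuousLinearMap.sub_apply, hEx, sub_zero] at this
    exact this
  -- ⟪x,x⟫ = ⟪QPx, QPx⟫
  have hstarQP : star (Q*P) = P*Q := by rw [star_mul, h.ps, h.qs]
  have hcomp : (P*Q) * (Q*P) = P*Q*P := by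
    rw [mul_assoc, mm h.q2, ← mul_assoc]
  have key := ContinuousLinearMap.adjoint_inner_left (Q*P) x ((Q*P) x)
  rw [← ContinuousLinearMap.star_eq_adjoint, hstarQP, ← ContinuousLinearMap.mul_apply,
    hcomp, hPQP] at key
  -- key : ⟪x, x⟫ = ⟪(Q*P) x, (Q*P) x⟫  (check direction)
  have hQPx : ‖(Q*P) x‖ = ‖x‖ := by
    have h1 : ‖x‖^2 = ‖(Q*P) x‖^2 := by
      have := congrArg RCLike.re key
      rwa [inner_self_eq_norm_sq, inner_self_eq_norm_sq] at this
    nlinarith [norm_nonneg x, norm_nonneg ((Q*P) x)]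
  have hPfix : ∀ (S : 𝐁), S*S = S → star S = S → ∀ y : H, ‖S y‖ = ‖y‖ → S y = y := by
    intro S hS2 hSs y hSy
    have e1 : (inner ℂ (S y) (S y) : ℂ) = inner ℂ y (S y) := by
      rw [inner_move hSs y (S y), ← ContinuousLinearMap.mul_apply, hS2]
    have e2 : (inner ℂ (S y) y : ℂ) = inner ℂ y (S y) := inner_move hSs y y
    have e3 := inner_sub_sub_self (𝕜 := ℂ) (x := S y) (y := y)
    have e4 : RCLike.re (inner ℂ (S y - y) (S y - y) : ℂ) = 0 := by
      rw [e3]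
      have r1 : RCLike.re (inner ℂ (S y) (S y) : ℂ) = ‖S y‖^2 := inner_self_eq_norm_sq _
      have r2 : RCLike.re (inner ℂ y y : ℂ) = ‖y‖^2 := inner_self_eq_norm_sq _
      have r3 : RCLike.re (inner ℂ (S y) y : ℂ) = ‖S y‖^2 := by
        rw [e2, ← e1]; exact inner_self_eq_norm_sq _
      have r4 : RCLike.re (inner ℂ y (S y) : ℂ) = ‖S y‖^2 := by
        rw [← e1]; exact inner_self_eq_norm_sq _
      simp only [map_sub, map_add, r1, r2, r3, r4, hSy]
      ring
    have e5 : ‖S y - y‖^2 = 0 := by rw [← inner_self_eq_norm_sq (𝕜 := ℂ)]; exact e4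
    have e6 : S y - y = 0 := by
      have := pow_eq_zero_iff (n := 2) (by norm_num) |>.mp e5
      exact norm_eq_zero.mp this
    exact sub_eq_zero.mp e6
  have hPx : P x = x := by
    apply hPfix P h.p2 h.ps
    have h1 : ‖(Q*P) x‖ ≤ ‖P x‖ := by
      rw [ContinuousLinearMap.mul_apply]; exact proj_norm_le h.q2 h.qs (P x)
    have h2 : ‖P x‖ ≤ ‖x‖ := proj_norm_le h.p2 h.ps x
    rw [hQPx] at h1
    exact le_antisymm h2 h1
  have hQx : Q x = x := by
    apply hPfix Q h.q2 h.qs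
    have : (Q*P) x = Q x := by rw [ContinuousLinearMap.mul_apply, hPx]
    rw [← this, hQPx]
  have := hfix x hPx hQx
  rw [hEx] at this
  exact this.symm

lemma approx_one [Nontrivial H] {P Q E : 𝐁} (h : OPT P Q E)
    (hfix : ∀ x : H, P x = x → Q x = x → E x = x)
    (h1 : (1:ℂ) ∈ spectrum ℂ (P*Q*P - E)) {s : ℝ} (hs0 : 0 ≤ s) (hs1 : s < 1)
    (hb : ∀ l ∈ spectrum ℂ (P*Q*P - E), l ≠ 1 → ‖l‖ ≤ s) : False := by
  set T : 𝐁 := P*Q*P - E with hTdef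
  have hT : IsSelfAdjoint T := h.o7
  have him : (fun t : ℝ => (t : ℂ)) '' spectrum ℝ T = spectrum ℂ T := by
    have := hT.spectrumRestricts.algebraMap_image
    simpa using this
  have h1r : (1:ℝ) ∈ spectrum ℝ T := by
    have : (1:ℂ) ∈ (fun t : ℝ => (t : ℂ)) '' spectrum ℝ T := him ▸ h1
    obtain ⟨t, ht, htt⟩ := this
    have : t = 1 := by
      have h2 : (t : ℂ) = 1 := htt
      exact_mod_cast h2
    rwa [← this]
  have hbr : ∀ t ∈ spectrum ℝ T, t ≠ 1 → |t| ≤ s := by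
    intro t ht ht1
    have : (t:ℂ) ∈ spectrum ℂ T := him ▸ ⟨t, ht, rfl⟩
    have hn := hb _ this (by exact_mod_cast ht1)
    simpa using hn
  set f : ℝ → ℝ := fun t => max 0 ((t - s)/(1-s)) with hfdef
  have hfc : Continuous f := by
    apply continuous_const.max
    exact (continuous_id.sub continuous_const).div_const _
  have hf1 : f 1 = 1 := by
    simp only [hfdef]
    rw [div_self (by linarith : (1:ℝ) - s ≠ 0)]
    simp
  have hf0 : ∀ t : ℝ, |t| ≤ s → f t = 0 := by
    intro t ht
    have h2 : t - s ≤ 0 := by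
      have := abs_le.mp ht
      linarith [this.2]
    simp only [hfdef]
    apply max_eq_left
    apply div_nonpos_of_nonpos_of_nonneg (by linarith) (by linarith)
  have hker : (spectrum ℝ T).EqOn (fun t => (t - 1) * f t) 0 := by
    intro t ht
    rcases eq_or_ne t 1 with rfl | ht1
    · simp
    · simp [hf0 t (hbr t ht ht1)]
  have hp0 : cfc (fun t => (t - 1) * f t) T = 0 := by
    rw [cfc_congr hker, cfc_zero]
  have hmul : cfc (fun t : ℝ => (t - 1) * f t) T = (T - 1) * cfc f T := by
    rw [cfc_mul _ _ T (by fun_prop) (by fun_prop)]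
    congr 1
    rw [cfc_sub (fun t : ℝ => t) (fun _ => (1:ℝ)) T, cfc_id' ℝ T, cfc_const 1 T, map_one]
  have hpne : cfc f T ≠ 0 := by
    intro hp
    have hms := cfc_map_spectrum f T hT hfc.continuousOn
    rw [hp] at hms
    have : (1:ℝ) ∈ spectrum ℝ (0 : 𝐁) := by
      rw [hms]
      exact ⟨1, h1r, hf1⟩
    rw [spectrum.zero_eq] at this
    simp at this
  obtain ⟨y, hy⟩ : ∃ y : H, cfc f T y ≠ 0 := by
    by_contra hcon
    push_neg at hcon
    exact hpne (ContinuousLinearMap.ext fun y => by simp [hcon y])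
  have hTy : (P*Q*P - E) (cfc f T y) = cfc f T y := by
    have e1 : ((T - 1) * cfc f T) y = 0 := by rw [← hmul, hp0]; simp
    rw [ContinuousLinearMap.mul_apply, ContinuousLinearMap.sub_apply,
      ContinuousLinearMap.one_apply, sub_eq_zero] at e1
    exact e1
  exact hy (eigen_zero h hfix hTy)

section Spectra
variable {P Q E F : H →L[ℂ] H}

lemma sp1 (h : OPT P Q E) :
    spectrum ℂ (P*Q*P - E) \ {0} ⊆ spectrum ℂ (1 - (P-Q)*(P-Q)) := by
  rintro l ⟨hl, hl0⟩
  simp only [Set.mem_singleton_iff] at hl0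
  by_contra hnA
  rw [spectrum.notMem_iff] at hnA
  rw [spectrum.mem_iff] at hl
  apply hl
  have := block1_isUnit (a := 1 - (P-Q)*(P-Q)) (r := P - E) h.o4 h.o5 hl0 hnA
  rwa [← h.o3] at this

lemma sp2 (h : OPT P Q E) (hc : OPT (1-P) (1-Q) F) :
    spectrum ℂ (1 - (P-Q)*(P-Q)) \ {0, 1} ⊆
      spectrum ℂ (P*Q*P - E) ∪ spectrum ℂ ((1-P)*(1-Q)*(1-P) - F) := by
  have hcc : OPT (1-(1-P)) (1-(1-Q)) E := by rw [sub_sub_cancel, sub_sub_cancel]; exact h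
  have m2c : ((1-P)*(1-Q)*(1-P) - F) * (E + F) = 0 := by
    have := hc.m2a hcc
    rwa [add_comm F E] at this
  have m2d : (E + F) * ((1-P)*(1-Q)*(1-P) - F) = 0 := by
    have := hc.m2b hcc
    rwa [add_comm F E] at this
  rintro l ⟨hl, hl01⟩
  simp only [Set.mem_insert_iff, Set.mem_singleton_iff, not_or] at hl01
  by_contra hcon
  simp only [Set.mem_union, not_or, spectrum.notMem_iff] at hcon
  rw [spectrum.mem_iff] at hl
  apply hl
  have := block2_isUnit (h.m1 hc) (h.m2a hc) (h.m2b hc) m2c m2d (h.m2e hc)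
    hl01.1 hl01.2 hcon.1 hcon.2
  rwa [← h.m3 hc] at this

lemma chainEq (h : OPT P Q E) (hc : OPT (1-P) (1-Q) F) :
    spectrum ℂ (P*Q*P - E) \ {0, 1} = spectrum ℂ ((1-P)*(1-Q)*(1-P) - F) \ {0, 1} := by
  have hDflip : (1:H →L[ℂ] H) - Q - (1 - P) = P - Q := by abel
  have c1 : spectrum ℂ (((P-Q)*(P-Q))*(P - E)) \ {0}
      = spectrum ℂ (((P-Q)*(P-Q))*((1 - Q) - F)) \ {0} := by
    have hswap := spectrum.nonzero_mul_comm (𝕜 := ℂ) (a := P*(1-Q)) (b := (1-Q)*P)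
    have e2 := (hc.swap).o6
    rw [sub_sub_cancel, hDflip] at e2
    rw [← h.o6, ← e2] at hswap
    exact hswap
  have c2 : spectrum ℂ ((1-P)*(1-Q)*(1-P) - F) \ {0}
      = spectrum ℂ ((1 - (P-Q)*(P-Q)) * ((1 - Q) - F)) \ {0} := by
    have hswap := spectrum.nonzero_mul_comm (𝕜 := ℂ) (a := (1-P)*(1-Q) - F) (b := (1-Q)*(1-P) - F)
    have e4 := (hc.swap).o3
    rw [hDflip] at e4
    rw [hc.o2, (hc.swap).o2, e4] at hswap
    exact hswap
  have comm2 : (1 - (P-Q)*(P-Q)) * ((1-Q) - F) = ((1-Q) - F) * (1 - (P-Q)*(P-Q)) := by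
    have := (hc.swap).o4
    rwa [hDflip] at this
  have idem2 : ((1-Q) - F) * ((1-Q) - F) = (1-Q) - F := (hc.swap).o5
  have key : ∀ l : ℂ, l ≠ 0 → l ≠ 1 →
      (l ∈ spectrum ℂ (P*Q*P - E) ↔ l ∈ spectrum ℂ ((1-P)*(1-Q)*(1-P) - F)) := by
    intro l h0 h1
    have h1' : (1:ℂ) - l ≠ 0 := sub_ne_zero.mpr (Ne.symm h1)
    rw [h.o3, flip_mem h.o4 h.o5 h0 h1, sub_sub_cancel]
    constructor
    · intro hm
      have hm2 : (1-l) ∈ spectrum ℂ (((P-Q)*(P-Q))*((1-Q) - F)) :=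
        ((Set.ext_iff.mp c1 (1-l)).mp ⟨hm, h1'⟩).1
      have hm3 : l ∈ spectrum ℂ ((1 - (P-Q)*(P-Q)) * ((1-Q) - F)) := by
        rw [flip_mem comm2 idem2 h0 h1, sub_sub_cancel]
        exact hm2
      exact ((Set.ext_iff.mp c2 l).mpr ⟨hm3, h0⟩).1
    · intro hm
      have hm3 : l ∈ spectrum ℂ ((1 - (P-Q)*(P-Q)) * ((1-Q) - F)) :=
        ((Set.ext_iff.mp c2 l).mp ⟨hm, h0⟩).1
      have hm2 : (1-l) ∈ spectrum ℂ (((P-Q)*(P-Q))*((1-Q) - F)) := by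
        rw [flip_mem comm2 idem2 h0 h1, sub_sub_cancel] at hm3
        exact hm3
      exact ((Set.ext_iff.mp c1 (1-l)).mpr ⟨hm2, h1'⟩).1
  ext l
  simp only [Set.mem_diff, Set.mem_insert_iff, Set.mem_singleton_iff, not_or]
  constructor
  · rintro ⟨hl, h0, h1⟩
    exact ⟨(key l h0 h1).mp hl, h0, h1⟩
  · rintro ⟨hl, h0, h1⟩
    exact ⟨(key l h0 h1).mpr hl, h0, h1⟩

lemma core [Nontrivial H] (h : OPT P Q E)
    (hfix : ∀ x : H, P x = x → Q x = x → E x = x)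
    (hc : OPT (1-P) (1-Q) F) :
    ‖P*Q - E‖^2
      = sSup ((norm '' (spectrum ℂ (1 - (P-Q)*(P-Q)) \ {1})) ∪ {0}) := by
  set S : Set ℝ := (norm '' (spectrum ℂ (1 - (P-Q)*(P-Q)) \ {1})) ∪ {0} with hS
  have hS0 : (0:ℝ) ∈ S := Or.inr rfl
  have hSbdd : BddAbove S := by
    refine ⟨‖(1 - (P-Q)*(P-Q) : H →L[ℂ] H)‖, ?_⟩
    rintro y (⟨l, ⟨hl, _⟩, rfl⟩ | hy)
    · exact spectrum.norm_le_norm_of_mem hl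
    · simp only [Set.mem_singleton_iff] at hy
      rw [hy]
      exact norm_nonneg _
  have hnormT : ‖P*Q - E‖^2 = ‖P*Q*P - E‖ := by
    rw [sq, ← CStarRing.norm_self_mul_star (x := P*Q - E), h.o1, h.o2]
  have hT : IsSelfAdjoint (P*Q*P - E : H →L[ℂ] H) := h.o7
  obtain ⟨z, hz, hznorm⟩ : ∃ z ∈ spectrum ℂ (P*Q*P - E), ‖z‖ = ‖P*Q*P - E‖ := by
    obtain ⟨z, hz, hze⟩ := spectrum.exists_nnnorm_eq_spectralRadius (a := P*Q*P - E)
    refine ⟨z, hz, ?_⟩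
    rw [hT.spectralRadius_eq_nnnorm] at hze
    exact_mod_cast congrArg ENNReal.toReal hze
  have hub : sSup S ≤ ‖P*Q*P - E‖ := by
    apply csSup_le ⟨0, hS0⟩
    rintro y (⟨l, ⟨hlA, hl1⟩, rfl⟩ | hy)
    · rcases eq_or_ne l 0 with rfl | hl0
      · simp only [norm_zero]
        exact norm_nonneg _
      · have hmem : l ∈ spectrum ℂ (P*Q*P - E) ∪ spectrum ℂ ((1-P)*(1-Q)*(1-P) - F) := by
          apply sp2 h hc
          refine ⟨hlA, ?_⟩
          simp only [Set.mem_insert_iff, Set.mem_singleton_iff, not_or]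
          exact ⟨hl0, by simpa using hl1⟩
        rcases hmem with hmem | hmem
        · exact spectrum.norm_le_norm_of_mem hmem
        · have : l ∈ spectrum ℂ (P*Q*P - E) \ {0, 1} := by
            rw [chainEq h hc]
            refine ⟨hmem, ?_⟩
            simp only [Set.mem_insert_iff, Set.mem_singleton_iff, not_or]
            exact ⟨hl0, by simpa using hl1⟩
          exact spectrum.norm_le_norm_of_mem this.1
    · simp only [Set.mem_singleton_iff] at hy
      rw [hy]
      exact norm_nonneg _
  have hlb : ‖P*Q*P - E‖ ≤ sSup S := by
    rcases eq_or_ne z 1 with rfl | hz1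
    · have hTn : ‖P*Q*P - E‖ = 1 := by rw [← hznorm]; simp
      rw [hTn]
      by_contra hcon
      push_neg at hcon
      set s' : ℝ := max 0 (sSup S) with hs'
      have hs'0 : (0:ℝ) ≤ s' := le_max_left _ _
      have hs'1 : s' < 1 := max_lt one_pos hcon
      have hball : ∀ l ∈ spectrum ℂ (P*Q*P - E), l ≠ 1 → ‖l‖ ≤ s' := by
        intro l hl hl1
        rcases eq_or_ne l 0 with rfl | hl0
        · simpa using hs'0
        · have hlA : l ∈ spectrum ℂ (1 - (P-Q)*(P-Q)) := sp1 h ⟨hl, by simp [hl0]⟩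
          have hmem : ‖l‖ ∈ S := Or.inl ⟨l, ⟨hlA, by simp [hl1]⟩, rfl⟩
          calc ‖l‖ ≤ sSup S := le_csSup hSbdd hmem
            _ ≤ s' := le_max_right _ _
      exact absurd (approx_one h hfix hz hs'0 hs'1 hball) (fun x => x)
    · rcases eq_or_ne z 0 with rfl | hz0
      · rw [← hznorm]
        simpa using le_csSup hSbdd hS0
      · have hlA : z ∈ spectrum ℂ (1 - (P-Q)*(P-Q)) := sp1 h ⟨hz, by simp [hz0]⟩
        rw [← hznorm]
        exact le_csSup hSbdd (Or.inl ⟨z, ⟨hlA, by simp [hz1]⟩, rfl⟩)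
  rw [hnormT]
  exact le_antisymm hlb hub

end Spectra
end Hilbert


section MainProof
variable {H : Type*} [NormedAddCommGroup H] [InnerProductSpace ℂ H] [CompleteSpace H]

lemma mkOPT (P₁ Q₁ E₁ : H →L[ℂ] H) (hP₁ : IsOrthogonalProjection P₁)
    (hQ₁ : IsOrthogonalProjection Q₁) (hE₁ : IsOrthogonalProjection E₁)
    (hr : LinearMap.range (E₁ : H →ₗ[ℂ] H) = LinearMap.range (P₁ : H →ₗ[ℂ] H) ⊓ LinearMap.range (Q₁ : H →ₗ[ℂ] H)) :
    OPT P₁ Q₁ E₁ ∧ (∀ x : H, P₁ x = x → Q₁ x = x → E₁ x = x) := by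
  have hfixP : ∀ (S : H →L[ℂ] H), S*S = S → ∀ y ∈ LinearMap.range (S : H →ₗ[ℂ] H), S y = y := by
    intro S hS2 y hy
    obtain ⟨z, rfl⟩ := LinearMap.mem_range.mp hy
    show S (S z) = S z
    rw [← ContinuousLinearMap.mul_apply, hS2]
  have pe : P₁ * E₁ = E₁ := by
    ext x
    rw [ContinuousLinearMap.mul_apply]
    apply hfixP P₁ hP₁.2
    have hmem : E₁ x ∈ LinearMap.range (E₁ : H →ₗ[ℂ] H) := LinearMap.mem_range.mpr ⟨x, rfl⟩
    rw [hr] at hmem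
    exact (Submodule.mem_inf.mp hmem).1
  have qe : Q₁ * E₁ = E₁ := by
    ext x
    rw [ContinuousLinearMap.mul_apply]
    apply hfixP Q₁ hQ₁.2
    have hmem : E₁ x ∈ LinearMap.range (E₁ : H →ₗ[ℂ] H) := LinearMap.mem_range.mpr ⟨x, rfl⟩
    rw [hr] at hmem
    exact (Submodule.mem_inf.mp hmem).2
  have ep : E₁ * P₁ = E₁ := by
    have := congrArg star pe
    rwa [star_mul, hP₁.1.star_eq, hE₁.1.star_eq] at this
  have eq' : E₁ * Q₁ = E₁ := by
    have := congrArg star qe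
    rwa [star_mul, hQ₁.1.star_eq, hE₁.1.star_eq] at this
  refine ⟨⟨hP₁.2, hP₁.1.star_eq, hQ₁.2, hQ₁.1.star_eq, hE₁.2, hE₁.1.star_eq,
    pe, ep, qe, eq'⟩, ?_⟩
  intro x hPx hQx
  apply hfixP E₁ hE₁.2
  rw [hr]
  exact Submodule.mem_inf.mpr ⟨LinearMap.mem_range.mpr ⟨x, hPx⟩, LinearMap.mem_range.mpr ⟨x, hQx⟩⟩

lemma mkF (P₁ Q₁ : H →L[ℂ] H) (hP₁ : IsOrthogonalProjection P₁)
    (hQ₁ : IsOrthogonalProjection Q₁) :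
    ∃ F : H →L[ℂ] H, OPT (1-P₁) (1-Q₁) F := by
  set K : Submodule ℂ H := LinearMap.ker (P₁ : H →ₗ[ℂ] H) ⊓ LinearMap.ker (Q₁ : H →ₗ[ℂ] H) with hK
  have hKc : IsClosed (K : Set H) := by
    have h1 : (K : Set H) = (LinearMap.ker (P₁ : H →ₗ[ℂ] H) : Set H) ∩ (LinearMap.ker (Q₁ : H →ₗ[ℂ] H) : Set H) := rfl
    rw [h1]
    exact (ContinuousLinearMap.isClosed_ker P₁).inter (ContinuousLinearMap.isClosed_ker Q₁)
  haveI : CompleteSpace K := hKc.completeSpace_coe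
  refine ⟨K.subtypeL.comp K.orthogonalProjectionOnto, ?_⟩
  set F : H →L[ℂ] H := K.subtypeL.comp K.orthogonalProjectionOnto with hF
  have hFmem : ∀ x : H, F x ∈ K := fun x => by
    simp only [hF, ContinuousLinearMap.comp_apply, Submodule.subtypeL_apply]
    exact (K.orthogonalProjectionOnto x).2
  have hFfix : ∀ y : H, y ∈ K → F y = y := by
    intro y hy
    have h1 : K.orthogonalProjectionOnto (((⟨y, hy⟩ : K) : H)) = ⟨y, hy⟩ :=
      Submodule.orthogonalProjectionOnto_mem_subspace_eq_self _
    simp only [hF, ContinuousLinearMap.comp_apply, Submodule.subtypeL_apply]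
    rw [h1]
  have f2 : F * F = F := ContinuousLinearMap.ext fun x => by
    rw [ContinuousLinearMap.mul_apply]
    exact hFfix _ (hFmem x)
  have fs : star F = F := (isSelfAdjoint_starProjection K).star_eq
  have p1 : (1-P₁) * (1-P₁) = 1-P₁ := by
    simp only [mul_sub, sub_mul, mul_one, one_mul, hP₁.2]
    abel
  have q1 : (1-Q₁) * (1-Q₁) = 1-Q₁ := by
    simp only [mul_sub, sub_mul, mul_one, one_mul, hQ₁.2]
    abel
  have ps : star ((1:H →L[ℂ] H)-P₁) = 1-P₁ := by rw [star_sub, star_one, hP₁.1.star_eq]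
  have qs : star ((1:H →L[ℂ] H)-Q₁) = 1-Q₁ := by rw [star_sub, star_one, hQ₁.1.star_eq]
  have pf' : (1-P₁) * F = F := ContinuousLinearMap.ext fun x => by
    have hk := hFmem x
    have hker : P₁ (F x) = 0 := (Submodule.mem_inf.mp hk).1
    simp [ContinuousLinearMap.mul_apply, ContinuousLinearMap.sub_apply, hker]
  have fp' : F * (1-P₁) = F := by
    have := congrArg star pf'
    rwa [star_mul, fs, ps] at this
  have qf' : (1-Q₁) * F = F := ContinuousLinearMap.ext fun x => by
    have hk := hFmem x
    have hker : Q₁ (F x) = 0 := (Submodule.mem_inf.mp hk).2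
    simp [ContinuousLinearMap.mul_apply, ContinuousLinearMap.sub_apply, hker]
  have fq' : F * (1-Q₁) = F := by
    have := congrArg star qf'
    rwa [star_mul, fs, qs] at this
  exact ⟨p1, ps, q1, qs, f2, fs, pf', fp', qf', fq'⟩

end MainProof

/-- The cosine of the Friedrichs angle, `‖PQ - Π‖` where `Π` is the orthogonal
projection onto `ran P ∩ ran Q`, depends only on the difference `P - Q`. -/
theorem friedrichs_angle_invariant (P Q P' Q' E E' : H →L[ℂ] H)
    (hP : IsOrthogonalProjection P) (hQ : IsOrthogonalProjection Q)
    (hP' : IsOrthogonalProjection P') (hQ' : IsOrthogonalProjection Q')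
    (hdiff : P - Q = P' - Q')
    (hE : IsOrthogonalProjection E)
    (hErange : LinearMap.range (E : H →ₗ[ℂ] H) = LinearMap.range (P : H →ₗ[ℂ] H) ⊓ LinearMap.range (Q : H →ₗ[ℂ] H))
    (hE' : IsOrthogonalProjection E')
    (hE'range : LinearMap.range (E' : H →ₗ[ℂ] H) = LinearMap.range (P' : H →ₗ[ℂ] H) ⊓ LinearMap.range (Q' : H →ₗ[ℂ] H)) :
    ‖P * Q - E‖ = ‖P' * Q' - E'‖ := by
  rcases subsingleton_or_nontrivial H with hsub | hnt
  · have heq : (P*Q - E) = (P'*Q' - E') := ContinuousLinearMap.ext fun x =>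
      Subsingleton.elim _ _
    rw [heq]
  · obtain ⟨hOPT, hfix⟩ := mkOPT P Q E hP hQ hE hErange
    obtain ⟨hOPT', hfix'⟩ := mkOPT P' Q' E' hP' hQ' hE' hE'range
    obtain ⟨F, hcF⟩ := mkF P Q hP hQ
    obtain ⟨F', hcF'⟩ := mkF P' Q' hP' hQ'
    have e1 := core hOPT hfix hcF
    have e2 := core hOPT' hfix' hcF'
    rw [hdiff] at e1
    have hsq : ‖P*Q - E‖^2 = ‖P'*Q' - E'‖^2 := by rw [e1, e2]
    have h1 := norm_nonneg (P*Q - E)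
    have h2 := norm_nonneg (P'*Q' - E')
    nlinarith [hsq, h1, h2]
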